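/- Let d ≥ 1, L_t > 0, α, β ≥ 0, let X ⊆ ℝ^d, let h : X → ℝ and g : X → ℝ be arbitrary, and let f : X → ℝ be such that f − g is L_t-Lipschitz with respect to the ℓ1 norm. Let σ ∈ ℝ^d, i ∈ {1, …, d}, and σ' = σ + 100 L_t d · e_i. Suppose u(σ) and u(σ') are (α,β)-approximate minimizers over X of z ↦ h(z) + g(z) − ⟨σ, z⟩ and z ↦ h(z) + g(z) − ⟨σ', z⟩ respectively, and v(σ) and v(σ') are exact minimizers over X of z ↦ h(z) + f(z) − ⟨σ, z⟩ and z ↦ h(z) + f(z) − ⟨σ', z⟩ respectively. If ‖u(σ) − v(σ)‖_1 ≤ 10d·|u_i(σ) − v_i(σ)|, then min(u_i(σ'), v_i(σ')) ≥ max(u_i(σ), v_i(σ)) − (1/10)|u_i(σ) − v_i(σ)| − 3(α + β‖σ‖_1)/(100 L_t d) − β. -/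
import Mathlib


open MeasureTheory

noncomputable section

/-- Standard inner product on `ℝ^d`. -/
def dotp {d : ℕ} (σ x : Fin d → ℝ) : ℝ := ∑ i, σ i * x i

/-- ℓ1 norm on `ℝ^d`. -/
def l1 {d : ℕ} (x : Fin d → ℝ) : ℝ := ∑ i, |x i|

/-- The `i`-th standard basis vector of `ℝ^d`. -/
def stdBasis {d : ℕ} (i : Fin d) : Fin d → ℝ := Pi.single i 1

/-- **Monotonicity 2 for Optimistic FTPL.** Here `u` plays the role of `x_t` (an
`(α,β)`-approximate minimizer of `h + g - ⟨σ,·⟩`, where `g` is the guess) and `v` the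
role of `x̄_{t+1}` (an exact minimizer of `h + f - ⟨σ,·⟩`), for perturbations `σ` and
`σ' = σ + 100 Lₜ d eᵢ`, where `f - g` is `Lₜ`-Lipschitz w.r.t. the ℓ1 norm. -/
theorem oftpl_monotonicity_two {d : ℕ} (hd : 1 ≤ d) (Lt : ℝ) (hLt : 0 < Lt)
    (α β : ℝ) (hα : 0 ≤ α) (hβ : 0 ≤ β)
    (X : Set (Fin d → ℝ)) (h g f : (Fin d → ℝ) → ℝ)
    (hfg : ∀ x ∈ X, ∀ y ∈ X, |(f x - g x) - (f y - g y)| ≤ Lt * l1 (x - y))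
    (σ : Fin d → ℝ) (i : Fin d)
    (u u' v v' : Fin d → ℝ)
    (huX : u ∈ X) (hu'X : u' ∈ X) (hvX : v ∈ X) (hv'X : v' ∈ X)
    (hu : ∀ z ∈ X, h u + g u - dotp σ u ≤ h z + g z - dotp σ z + (α + β * l1 σ))
    (hu' : ∀ z ∈ X,
      h u' + g u' - dotp (σ + (100 * Lt * d) • stdBasis i) u' ≤
        h z + g z - dotp (σ + (100 * Lt * d) • stdBasis i) z
          + (α + β * l1 (σ + (100 * Lt * d) • stdBasis i)))
    (hv : ∀ z ∈ X, h v + f v - dotp σ v ≤ h z + f z - dotp σ z)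
    (hv' : ∀ z ∈ X,
      h v' + f v' - dotp (σ + (100 * Lt * d) • stdBasis i) v' ≤
        h z + f z - dotp (σ + (100 * Lt * d) • stdBasis i) z)
    (hstab : l1 (u - v) ≤ 10 * d * |u i - v i|) :
    min (u' i) (v' i) ≥
      max (u i) (v i) - (1 / 10) * |u i - v i| - 3 * (α + β * l1 σ) / (100 * Lt * d) - β := by
  have hd0 : (0:ℝ) < (d:ℝ) := by exact_mod_cast Nat.lt_of_lt_of_le Nat.zero_lt_one hd
  have hM' : (0:ℝ) < 100 * Lt * (d:ℝ) := mul_pos (mul_pos (by norm_num) hLt) hd0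
  -- dot product with the shifted perturbation
  have hdot : ∀ z : Fin d → ℝ,
      dotp (σ + (100 * Lt * (d:ℝ)) • stdBasis i) z = dotp σ z + (100 * Lt * (d:ℝ)) * z i := by
    intro z
    simp only [dotp, stdBasis, Pi.add_apply, Pi.smul_apply, smul_eq_mul, add_mul,
      Finset.sum_add_distrib, Pi.single_apply, mul_ite, ite_mul, mul_one, mul_zero, zero_mul,
      Finset.sum_ite_eq', Finset.mem_univ, if_true]
  -- ℓ1 norm of the shifted perturbation
  have hl1' : l1 (σ + (100 * Lt * (d:ℝ)) • stdBasis i) ≤ l1 σ + 100 * Lt * (d:ℝ) := by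
    have h1 : ∀ j, |(σ + (100 * Lt * (d:ℝ)) • stdBasis i) j| ≤
        |σ j| + (if j = i then 100 * Lt * (d:ℝ) else 0) := by
      intro j
      simp only [stdBasis, Pi.add_apply, Pi.smul_apply, smul_eq_mul, Pi.single_apply]
      split <;> simp
      · calc |σ j + 100 * Lt * (d:ℝ)| ≤ |σ j| + |100 * Lt * (d:ℝ)| := abs_add_le _ _
          _ = |σ j| + 100 * Lt * (d:ℝ) := by rw [abs_of_nonneg hM'.le]
    calc l1 (σ + (100 * Lt * (d:ℝ)) • stdBasis i)
        ≤ ∑ j, (|σ j| + (if j = i then 100 * Lt * (d:ℝ) else 0)) :=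
          Finset.sum_le_sum fun j _ => h1 j
      _ = l1 σ + 100 * Lt * (d:ℝ) := by
          rw [Finset.sum_add_distrib]
          simp [l1, Finset.sum_ite_eq']
  simp only [hdot] at hu' hv'
  have hl1σ : 0 ≤ l1 σ := Finset.sum_nonneg fun j _ => abs_nonneg _
  have hβl : 0 ≤ β * l1 σ := mul_nonneg hβ hl1σ
  -- bound on the slack for the shifted perturbation
  have hA' : α + β * l1 (σ + (100 * Lt * (d:ℝ)) • stdBasis i) ≤
      (α + β * l1 σ) + β * (100 * Lt * (d:ℝ)) := by
    have := mul_le_mul_of_nonneg_left hl1' hβ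
    linarith [this]
  -- Lipschitz bounds
  have hLip := abs_le.mp (hfg u huX v hvX)
  have hLt10 : Lt * l1 (u - v) ≤ 10 * Lt * (d:ℝ) * |u i - v i| :=
    calc Lt * l1 (u - v) ≤ Lt * (10 * (d:ℝ) * |u i - v i|) :=
          mul_le_mul_of_nonneg_left hstab hLt.le
      _ = 10 * Lt * (d:ℝ) * |u i - v i| := by ring
  have hl1uv : 0 ≤ l1 (u - v) := Finset.sum_nonneg fun j _ => abs_nonneg _
  have hΔ : 0 ≤ |u i - v i| := abs_nonneg _
  -- specializations of the optimality conditions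
  have e1 := hu u' hu'X
  have e2 := hu v hvX
  have e3 := hu' u huX
  have e4 := hu' v hvX
  have e5 := hv u huX
  have e7 := hv v' hv'X
  have e8 := hv' v hvX
  have e9 := hv' u huX
  -- cancellation of the denominator
  have hE : (100 * Lt * (d:ℝ)) * (3 * (α + β * l1 σ) / (100 * Lt * (d:ℝ)))
      = 3 * (α + β * l1 σ) := by
    field_simp
  have hE' : 0 ≤ 3 * (α + β * l1 σ) / (100 * Lt * (d:ℝ)) := by positivity
  have hMβ : 0 ≤ (100 * Lt * (d:ℝ)) * β := mul_nonneg hM'.le hβ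
  have hMΔ : 0 ≤ (100 * Lt * (d:ℝ)) * ((1/10) * |u i - v i|) :=
    mul_nonneg hM'.le (by positivity)
  have hMΔ' : (100 * Lt * (d:ℝ)) * ((1/10) * |u i - v i|) = 10 * Lt * (d:ℝ) * |u i - v i| := by
    ring
  set E : ℝ := 3 * (α + β * l1 σ) / (100 * Lt * (d:ℝ)) with hEdef
  set Δ : ℝ := |u i - v i| with hΔdef
  -- the four coordinate bounds
  have b1 : u i ≤ u' i + (E + β + (1/10) * Δ) := by
    refine le_of_mul_le_mul_left ?_ hM'
    rw [mul_add, mul_add, mul_add, hE]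
    linarith [e1, e3, hA', hMΔ, hα, hβl]
  have b2 : v i ≤ u' i + (E + β + (1/10) * Δ) := by
    refine le_of_mul_le_mul_left ?_ hM'
    rw [mul_add, mul_add, mul_add, hE, hMΔ']
    linarith [e1, e4, e5, hA', hLip.2, hLt10, hα, hβl]
  have b3 : u i ≤ v' i + (E + β + (1/10) * Δ) := by
    refine le_of_mul_le_mul_left ?_ hM'
    rw [mul_add, mul_add, mul_add, hE, hMΔ']
    linarith [e2, e7, e9, hLip.1, hLt10, hα, hβl, hMβ]
  have b4 : v i ≤ v' i + (E + β + (1/10) * Δ) := by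
    refine le_of_mul_le_mul_left ?_ hM'
    rw [mul_add, mul_add, mul_add, hE]
    linarith [e7, e8, hα, hβl, hMβ, hMΔ]
  rw [ge_iff_le, le_min_iff]
  constructor <;>
  · rcases le_total (u i) (v i) with hc | hc
    · rw [max_eq_right hc]; linarith
    · rw [max_eq_left hc]; linarith
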